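/- arXiv:1804.09402 — 2 statements merged into one kernel-verified Lean document; each statement's English description precedes it below -/
import Mathlib

section
/- Let K : ℝ → ℝ be a bounded, symmetric kernel with compact support satisfying ∫ K = 1, ∫ z K(z) dz = 0, ∫ z² K(z) dz = c_K ≠ 0, ∫ z³ K(z) dz = 0. Define the jackknife kernel K*(z) := 2 K(z) - (1/√2) K(z/√2). Then ∫ K* = 1, ∫ z K*(z) dz = 0, ∫ z² K*(z) dz = 0, and ∫ z³ K*(z) dz = 0. Consequently, for g four times continuously differentiable near x, the jackknife estimate satisfies (1/hₙ) ∫ g(y) K*((x-y)/hₙ) dy - g(x) = O(hₙ⁴) as hₙ → 0. -/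
open MeasureTheory Filter

/-- On a set of unique differentiability, the iterated derivative within the set of a globally
`C^n` function agrees with the global iterated derivative. -/
lemma myIterDerivWithin_eq {g : ℝ → ℝ} {n : ℕ∞} (hg : ContDiff ℝ n g) {m : ℕ}
    (hm : (m : ℕ∞) ≤ n) {s : Set ℝ} (hs : UniqueDiffOn ℝ s) {y : ℝ} (hy : y ∈ s) :
    iteratedDerivWithin m g s y = iteratedDeriv m g y := by
  have H := ((contDiff_iff_ftaylorSeries.mp hg).hasFTaylorSeriesUpToOn
    s).eq_iteratedFDerivWithin_of_uniqueDiffOn (by exact_mod_cast hm) hs hy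
  rw [iteratedDerivWithin_eq_iteratedFDerivWithin, iteratedDeriv_eq_iteratedFDeriv, ← H]
  rfl

/-- Fourth order Taylor bound, two-sided. -/
lemma myTaylor4 {g : ℝ → ℝ} (hg : ContDiff ℝ 4 g) {M : ℝ}
    (hM : ∀ y, |iteratedDeriv 4 g y| ≤ M) (x u : ℝ) :
    |g u - ∑ k ∈ Finset.range 4, ((k.factorial : ℝ)⁻¹ * (u - x) ^ k) * iteratedDeriv k g x|
      ≤ M * |u - x| ^ 4 / 6 := by
  have key : ∀ (f : ℝ → ℝ), ContDiff ℝ 4 f → (∀ y, |iteratedDeriv 4 f y| ≤ M) →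
      ∀ a b : ℝ, a ≤ b →
      |f b - ∑ k ∈ Finset.range 4, ((k.factorial : ℝ)⁻¹ * (b - a) ^ k) * iteratedDeriv k f a|
        ≤ M * (b - a) ^ 4 / 6 := by
    intro f hf hMf a b hab
    rcases eq_or_lt_of_le hab with rfl | hlt
    · simp [Finset.sum_range_succ]
    · have hub := uniqueDiffOn_Icc hlt
      have hcd : ContDiffOn ℝ ((3 : ℕ) + 1) f (Set.Icc a b) := hf.contDiffOn
      have hbound : ∀ y ∈ Set.Icc a b,
          ‖iteratedDerivWithin ((3 : ℕ) + 1) f (Set.Icc a b) y‖ ≤ M := by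
        intro y hy
        rw [Real.norm_eq_abs,
          myIterDerivWithin_eq hf (by norm_num) hub hy]
        exact hMf y
      have hT := taylor_mean_remainder_bound (n := 3) hab hcd
        (Set.right_mem_Icc.mpr hab) hbound
      rw [taylor_within_apply] at hT
      have hsum : (∑ k ∈ Finset.range 4, ((k.factorial : ℝ)⁻¹ * (b - a) ^ k) •
          iteratedDerivWithin k f (Set.Icc a b) a)
          = ∑ k ∈ Finset.range 4, ((k.factorial : ℝ)⁻¹ * (b - a) ^ k) * iteratedDeriv k f a := by
        refine Finset.sum_congr rfl fun k hk => ?_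
        rw [smul_eq_mul,
          myIterDerivWithin_eq hf (by
            have : k < 4 := Finset.mem_range.mp hk
            exact_mod_cast this.le) hub (Set.left_mem_Icc.mpr hab)]
      rw [hsum] at hT
      rw [Real.norm_eq_abs] at hT
      calc |f b - ∑ k ∈ Finset.range 4, ((k.factorial : ℝ)⁻¹ * (b - a) ^ k) * iteratedDeriv k f a|
          ≤ M * (b - a) ^ (3 + 1) / (Nat.factorial 3) := hT
        _ = M * (b - a) ^ 4 / 6 := by norm_num [Nat.factorial]
  rcases le_or_gt x u with hxu | hux
  · rw [show |u - x| = u - x from abs_of_nonneg (by linarith)]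
    exact key g hg hM x u hxu
  · set f : ℝ → ℝ := fun y => g (2 * x - y) with hf_def
    have hf : ContDiff ℝ 4 f := hg.comp (contDiff_const.sub contDiff_id)
    have hfe : ∀ (k : ℕ) (y : ℝ),
        iteratedDeriv k f y = (-1 : ℝ) ^ k * iteratedDeriv k g (2 * x - y) := by
      intro k y
      have h1 : f = fun y => (fun t => g (-t)) (y + -(2 * x)) := by
        funext y
        show g (2 * x - y) = g (-(y + -(2 * x)))
        congr 1
        ring
      rw [h1, iteratedDeriv_comp_add_const k (fun t => g (-t)) (-(2 * x))]
      show iteratedDeriv k (fun t => g (-t)) (y + -(2 * x)) = _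
      rw [iteratedDeriv_comp_neg k g (y + -(2 * x))]
      have harg : -(y + -(2 * x)) = 2 * x - y := by ring
      rw [harg, smul_eq_mul]
    have hMf : ∀ y, |iteratedDeriv 4 f y| ≤ M := by
      intro y
      rw [hfe 4 y]
      have : ((-1 : ℝ)) ^ 4 = 1 := by norm_num
      rw [this, one_mul]
      exact hM _
    have hle : x ≤ 2 * x - u := by linarith
    have hT := key f hf hMf x (2 * x - u) hle
    have e1 : f (2 * x - u) = g u := by
      show g (2 * x - (2 * x - u)) = g u
      congr 1
      ring
    have e2 : ∀ k ∈ Finset.range 4,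
        ((k.factorial : ℝ)⁻¹ * (2 * x - u - x) ^ k) * iteratedDeriv k f x
          = ((k.factorial : ℝ)⁻¹ * (u - x) ^ k) * iteratedDeriv k g x := by
      intro k _
      rw [hfe k x, show (2 * x - x : ℝ) = x from by ring]
      have hpow : (2 * x - u - x) ^ k * (-1 : ℝ) ^ k = (u - x) ^ k := by
        rw [← mul_pow]
        congr 1
        ring
      rw [← hpow]
      ring
    have e3 : 2 * x - u - x = |u - x| := by
      rw [abs_of_nonpos (by linarith : u - x ≤ 0)]
      ring
    rw [e1, Finset.sum_congr rfl e2, e3] at hT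
    exact hT

/-- A measurable, bounded, compactly supported kernel times a continuous function is
integrable. -/
lemma myIntegrable {K : ℝ → ℝ} (hK : Measurable K) {M B : ℝ} (hbd : ∀ z, |K z| ≤ M)
    (hsupp : ∀ z, B < |z| → K z = 0) {f : ℝ → ℝ} (hf : Continuous f) :
    Integrable (fun z => f z * K z) := by
  have hmeas : Measurable fun z => f z * K z := hf.measurable.mul hK
  have hind : (fun z => f z * K z) = (Set.Icc (-B) B).indicator (fun z => f z * K z) := by
    funext z
    by_cases hz : |z| ≤ B
    · rw [Set.indicator_of_mem (by rwa [Set.mem_Icc, ← abs_le])]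
    · rw [Set.indicator_of_notMem (by rwa [Set.mem_Icc, ← abs_le]),
        hsupp z (not_le.mp hz), mul_zero]
  rw [hind, integrable_indicator_iff measurableSet_Icc]
  obtain ⟨Cf, hCf⟩ := isCompact_Icc.exists_bound_of_continuousOn hf.continuousOn
  apply Measure.integrableOn_of_bounded (M := Cf * M) measure_Icc_lt_top.ne
    hmeas.aestronglyMeasurable
  filter_upwards [ae_restrict_mem measurableSet_Icc] with z hz
  rw [Real.norm_eq_abs, abs_mul]
  have h1 : |f z| ≤ Cf := by
    have := hCf z hz
    rwa [Real.norm_eq_abs] at this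
  exact mul_le_mul h1 (hbd z) (abs_nonneg _) (le_trans (abs_nonneg _) h1)

/-- Scaling identity for moments. -/
lemma myScale (K : ℝ → ℝ) (k : ℕ) :
    ∫ z, z ^ k * ((Real.sqrt 2)⁻¹ * K (z / Real.sqrt 2))
      = (Real.sqrt 2) ^ k * ∫ z, z ^ k * K z := by
  have hs : (0 : ℝ) < Real.sqrt 2 := Real.sqrt_pos.mpr two_pos
  have h1 : ∀ z : ℝ, z ^ k * ((Real.sqrt 2)⁻¹ * K (z / Real.sqrt 2))
      = ((Real.sqrt 2) ^ k * (Real.sqrt 2)⁻¹)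
        * ((fun w => w ^ k * K w) (z / Real.sqrt 2)) := by
    intro z
    have hne : (Real.sqrt 2) ≠ 0 := hs.ne'
    simp only [div_pow]
    field_simp
  simp_rw [h1]
  rw [integral_const_mul, Measure.integral_comp_div (fun w => w ^ k * K w) (Real.sqrt 2),
    smul_eq_mul, abs_of_pos hs, ← mul_assoc, mul_assoc ((Real.sqrt 2) ^ k) _ _,
    inv_mul_cancel₀ hs.ne', mul_one]

theorem stmt_3 (K g : ℝ → ℝ) (A c_K : ℝ)
    (hKmeas : Measurable K) (hKbd : ∃ M, ∀ z, |K z| ≤ M)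
    (hKsymm : ∀ z, K (-z) = K z)
    (hKsupp : ∀ z, z ∉ Set.Icc (-A) A → K z = 0)
    (hKint : ∫ z, K z = 1)
    (hK1 : ∫ z, z * K z = 0)
    (hK2 : ∫ z, z^2 * K z = c_K) (hcK : c_K ≠ 0)
    (hK3 : ∫ z, z^3 * K z = 0)
    (Kstar : ℝ → ℝ)
    (hKstar : ∀ z, Kstar z = 2 * K z - (1 / Real.sqrt 2) * K (z / Real.sqrt 2))
    (hg : ContDiff ℝ 4 g)
    (hgbd : ∃ M, ∀ k ≤ 4, ∀ y, |iteratedDeriv k g y| ≤ M)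
    (x : ℝ) (h : ℕ → ℝ) (hpos : ∀ n, 0 < h n) (h0 : Tendsto h atTop (nhds 0)) :
    (∫ z, Kstar z = 1) ∧ (∫ z, z * Kstar z = 0) ∧
    (∫ z, z^2 * Kstar z = 0) ∧ (∫ z, z^3 * Kstar z = 0) ∧
    ∃ C, ∀ᶠ n in atTop,
      |(1 / h n) * (∫ y, g y * Kstar ((x - y) / h n)) - g x| ≤ C * (h n)^4 := by
  obtain ⟨M, hM⟩ := hKbd
  obtain ⟨Mg, hMg⟩ := hgbd
  have hs : (0 : ℝ) < Real.sqrt 2 := Real.sqrt_pos.mpr two_pos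
  have hs1 : (1 : ℝ) ≤ Real.sqrt 2 := by
    rw [show (1 : ℝ) = Real.sqrt 1 from Real.sqrt_one.symm]
    exact Real.sqrt_le_sqrt (by norm_num)
  have hM0 : 0 ≤ M := le_trans (abs_nonneg _) (hM 0)
  -- support of K in terms of |A|
  have hsuppA : ∀ z, |A| < |z| → K z = 0 := by
    intro z hz
    apply hKsupp
    intro hmem
    rw [Set.mem_Icc] at hmem
    have : |z| ≤ |A| := abs_le.mpr ⟨le_trans (neg_le_neg (le_abs_self A)) hmem.1,
      le_trans hmem.2 (le_abs_self A)⟩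
    linarith
  -- the rescaled kernel
  set K2 : ℝ → ℝ := fun z => (Real.sqrt 2)⁻¹ * K (z / Real.sqrt 2) with hK2def
  have hK2meas : Measurable K2 := measurable_const.mul (hKmeas.comp (measurable_id.div_const _))
  have hK2bd : ∀ z, |K2 z| ≤ M := by
    intro z
    rw [hK2def]
    simp only [abs_mul]
    calc |(Real.sqrt 2)⁻¹| * |K (z / Real.sqrt 2)| ≤ 1 * M := by
          apply mul_le_mul _ (hM _) (abs_nonneg _) one_pos.le
          rw [abs_of_pos (inv_pos.mpr hs)]
          exact inv_le_one_of_one_le₀ hs1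
      _ = M := one_mul M
  have hK2supp : ∀ z, Real.sqrt 2 * |A| < |z| → K2 z = 0 := by
    intro z hz
    have : |A| < |z / Real.sqrt 2| := by
      rw [abs_div, abs_of_pos hs, lt_div_iff₀ hs]
      calc |A| * Real.sqrt 2 = Real.sqrt 2 * |A| := by ring
        _ < |z| := hz
    rw [hK2def]
    simp [hsuppA _ this]
  -- Kstar as a difference
  have hKstar_eq : Kstar = fun z => 2 * K z - K2 z := by
    funext z
    rw [hKstar z, hK2def, one_div]
  have hKstar_meas : Measurable Kstar := by
    rw [hKstar_eq]
    exact (measurable_const.mul hKmeas).sub hK2meas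
  have hKstar_bd : ∀ z, |Kstar z| ≤ 3 * M := by
    intro z
    rw [hKstar_eq]
    have tri : ∀ a b : ℝ, |a - b| ≤ |a| + |b| := fun a b => by
      rw [sub_eq_add_neg]
      simpa [abs_neg] using abs_add_le a (-b)
    calc |2 * K z - K2 z| ≤ |2 * K z| + |K2 z| := tri _ _
      _ ≤ 2 * M + M := by
          rw [abs_mul]
          have := hM z
          have := hK2bd z
          have : |(2:ℝ)| = 2 := by norm_num
          nlinarith [hM z, hK2bd z, abs_nonneg (K z)]
      _ = 3 * M := by ring
  set B : ℝ := Real.sqrt 2 * |A| with hBdef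
  have hBA : |A| ≤ B := by
    rw [hBdef]
    nlinarith [abs_nonneg A]
  have hKstar_supp : ∀ z, B < |z| → Kstar z = 0 := by
    intro z hz
    rw [hKstar_eq]
    simp only
    rw [hsuppA z (lt_of_le_of_lt hBA hz), hK2supp z hz, mul_zero, sub_zero]
  -- integrability
  have hintK : ∀ k : ℕ, Integrable (fun z => z ^ k * K z) :=
    fun k => myIntegrable hKmeas hM (fun z hz => hsuppA z hz) (continuous_pow k)
  have hintK2 : ∀ k : ℕ, Integrable (fun z => z ^ k * K2 z) :=
    fun k => myIntegrable hK2meas hK2bd hK2supp (continuous_pow k)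
  have hintKs : ∀ k : ℕ, Integrable (fun z => z ^ k * Kstar z) :=
    fun k => myIntegrable hKstar_meas hKstar_bd hKstar_supp (continuous_pow k)
  -- moments
  have hmom : ∀ k : ℕ, ∫ z, z ^ k * Kstar z
      = 2 * (∫ z, z ^ k * K z) - (Real.sqrt 2) ^ k * ∫ z, z ^ k * K z := by
    intro k
    have he : (fun z => z ^ k * Kstar z)
        = fun z => 2 * (z ^ k * K z) - z ^ k * K2 z := by
      funext z
      rw [hKstar_eq]
      ring
    rw [he, integral_sub ((hintK k).const_mul 2) (hintK2 k), integral_const_mul]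
    congr 1
    rw [hK2def]
    exact myScale K k
  have hsq : (Real.sqrt 2) ^ 2 = 2 := Real.sq_sqrt (by norm_num)
  have hm0 : ∫ z, Kstar z = 1 := by
    have e : ∫ z, (z : ℝ) ^ 0 * Kstar z = ∫ z, Kstar z := by simp
    have e2 : ∫ z, (z : ℝ) ^ 0 * K z = 1 := by simpa using hKint
    rw [← e, hmom 0, e2]
    norm_num
  have hm1 : ∫ z, z * Kstar z = 0 := by
    have e : ∫ z, (z : ℝ) ^ 1 * Kstar z = ∫ z, z * Kstar z := by simp
    have e2 : ∫ z, (z : ℝ) ^ 1 * K z = 0 := by simpa using hK1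
    rw [← e, hmom 1, e2]
    ring
  have hm2 : ∫ z, z ^ 2 * Kstar z = 0 := by
    rw [hmom 2, hK2, hsq]
    ring
  have hm3 : ∫ z, z ^ 3 * Kstar z = 0 := by
    rw [hmom 3, hK3]
    ring
  refine ⟨hm0, hm1, hm2, hm3, Mg / 6 * ∫ z, z ^ 4 * |Kstar z|, Eventually.of_forall fun n => ?_⟩
  set t : ℝ := h n with htdef
  have ht : 0 < t := hpos n
  have htne : t ≠ 0 := ht.ne'
  have hgc : Continuous g := hg.continuous
  have hMg4 : ∀ y, |iteratedDeriv 4 g y| ≤ Mg := hMg 4 le_rfl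
  -- change of variables
  have cv : (1 / t) * (∫ y, g y * Kstar ((x - y) / t)) = ∫ z, g (x - t * z) * Kstar z := by
    have step1 : (∫ y, g y * Kstar ((x - y) / t)) = ∫ y, g (x - y) * Kstar (y / t) := by
      have hh := integral_sub_left_eq_self (μ := volume)
        (fun y => g y * Kstar ((x - y) / t)) x
      simp only [sub_sub_cancel] at hh
      exact hh.symm
    have step2 : (∫ y, g (x - y) * Kstar (y / t)) = |t| • ∫ z, g (x - t * z) * Kstar z := by
      have hh := Measure.integral_comp_div (fun w => g (x - t * w) * Kstar w) t
      have hc : ∀ y : ℝ, t * (y / t) = y := fun y => by field_simp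
      simp only [hc] at hh
      exact hh
    rw [step1, step2, smul_eq_mul, abs_of_pos ht, ← mul_assoc, one_div,
      inv_mul_cancel₀ htne, one_mul]
  -- Taylor coefficients
  set c : ℕ → ℝ := fun k => ((k.factorial : ℝ)⁻¹ * (-t) ^ k) * iteratedDeriv k g x with hcdef
  set P : ℝ → ℝ := fun z => ∑ k ∈ Finset.range 4, c k * z ^ k with hPdef
  have hPcont : Continuous P := by
    rw [hPdef]
    exact continuous_finset_sum _ fun k _ => continuous_const.mul (continuous_pow k)
  -- the polynomial part integrates to g x
  have sumint : ∫ z, (∑ k ∈ Finset.range 4, c k * (z ^ k * Kstar z)) = g x := by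
    rw [integral_finset_sum _ (fun k _ => (hintKs k).const_mul (c k))]
    have e : ∀ k ∈ Finset.range 4,
        ∫ z, c k * (z ^ k * Kstar z) = c k * ∫ z, z ^ k * Kstar z :=
      fun k _ => integral_const_mul _ _
    rw [Finset.sum_congr rfl e, Finset.sum_range_succ, Finset.sum_range_succ,
      Finset.sum_range_succ, Finset.sum_range_one]
    have e0 : ∫ z, (z : ℝ) ^ 0 * Kstar z = 1 := by simpa using hm0
    have e1 : ∫ z, (z : ℝ) ^ 1 * Kstar z = 0 := by simpa using hm1
    rw [e0, e1, hm2, hm3, hcdef]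
    simp [Nat.factorial]
  -- pointwise Taylor bound
  have hPtaylor : ∀ z : ℝ, |g (x - t * z) - P z| ≤ Mg * |x - t * z - x| ^ 4 / 6 := by
    intro z
    have hT := myTaylor4 hg hMg4 x (x - t * z)
    have hPz : (∑ k ∈ Finset.range 4,
        ((k.factorial : ℝ)⁻¹ * (x - t * z - x) ^ k) * iteratedDeriv k g x) = P z := by
      rw [hPdef]
      refine Finset.sum_congr rfl fun k _ => ?_
      rw [hcdef, show (x - t * z - x : ℝ) = (-t) * z from by ring, mul_pow]
      ring
    rwa [hPz] at hT
  -- split identity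
  have hsplit : ∀ z : ℝ, g (x - t * z) * Kstar z
      = (g (x - t * z) - P z) * Kstar z + ∑ k ∈ Finset.range 4, c k * (z ^ k * Kstar z) := by
    intro z
    have hPz : P z * Kstar z = ∑ k ∈ Finset.range 4, c k * (z ^ k * Kstar z) := by
      rw [hPdef]
      simp only [Finset.sum_mul]
      exact Finset.sum_congr rfl fun k _ => by ring
    rw [← hPz]
    ring
  have hintR : Integrable (fun z => (g (x - t * z) - P z) * Kstar z) :=
    myIntegrable hKstar_meas hKstar_bd hKstar_supp
      ((hgc.comp (continuous_const.sub (continuous_const.mul continuous_id))).sub hPcont)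
  have hintSum : Integrable (fun z => ∑ k ∈ Finset.range 4, c k * (z ^ k * Kstar z)) :=
    integrable_finset_sum _ fun k _ => (hintKs k).const_mul (c k)
  have main_eq : (∫ z, g (x - t * z) * Kstar z) - g x
      = ∫ z, (g (x - t * z) - P z) * Kstar z := by
    rw [show (fun z => g (x - t * z) * Kstar z)
        = fun z => (g (x - t * z) - P z) * Kstar z
          + ∑ k ∈ Finset.range 4, c k * (z ^ k * Kstar z) from funext hsplit,
      integral_add hintR hintSum, sumint]
    ring
  -- bound
  have habs_meas : Measurable fun z => |Kstar z| := hKstar_meas.abs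
  have habs_bd : ∀ z, |(|Kstar z|)| ≤ 3 * M := by
    intro z
    rw [abs_abs]
    exact hKstar_bd z
  have habs_supp : ∀ z, B < |z| → |Kstar z| = 0 := by
    intro z hz
    rw [hKstar_supp z hz, abs_zero]
  have hint4 : Integrable (fun z => z ^ 4 * |Kstar z|) :=
    myIntegrable habs_meas habs_bd habs_supp (continuous_pow 4)
  have hbd2 : ∀ z : ℝ, ‖(g (x - t * z) - P z) * Kstar z‖
      ≤ (Mg * t ^ 4 / 6) * (z ^ 4 * |Kstar z|) := by
    intro z
    rw [Real.norm_eq_abs, abs_mul]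
    have h1 : |g (x - t * z) - P z| * |Kstar z|
        ≤ (Mg * |x - t * z - x| ^ 4 / 6) * |Kstar z| :=
      mul_le_mul_of_nonneg_right (hPtaylor z) (abs_nonneg _)
    refine h1.trans (le_of_eq ?_)
    have e1 : |x - t * z - x| = |t| * |z| := by
      rw [show (x - t * z - x : ℝ) = -(t * z) from by ring, abs_neg, abs_mul]
    rw [e1, mul_pow, abs_of_pos ht, show |z| ^ 4 = z ^ 4 from by
      rw [pow_abs, abs_of_nonneg (by positivity)]]
    ring
  have hquant : |∫ z, (g (x - t * z) - P z) * Kstar z|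
      ≤ (Mg * t ^ 4 / 6) * ∫ z, z ^ 4 * |Kstar z| := by
    have hnorm := norm_integral_le_of_norm_le (hint4.const_mul (Mg * t ^ 4 / 6))
      (Eventually.of_forall hbd2)
    rwa [Real.norm_eq_abs, integral_const_mul] at hnorm
  calc |(1 / t) * (∫ y, g y * Kstar ((x - y) / t)) - g x|
      = |∫ z, (g (x - t * z) - P z) * Kstar z| := by rw [cv, main_eq]
    _ ≤ (Mg * t ^ 4 / 6) * ∫ z, z ^ 4 * |Kstar z| := hquant
    _ = (Mg / 6 * ∫ z, z ^ 4 * |Kstar z|) * t ^ 4 := by ring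
end

section
/- Let X and V be independent random variables, V with E[V]=0, E[V²]=1, and let μ, σ, K, f be as in the kernel regression setup with σ bounded and f a bounded continuous density of X, K bounded with compact support. Define Y = μ(X) + σ(X)V and Tₙ = (1/(n bₙ f(x))) Σ_{j=1}^n σ(Xⱼ)Vⱼ K((x−Xⱼ)/bₙ), where (Xⱼ, Vⱼ) are copies of (X, V) with Vⱼ i.i.d. and independent of (Xⱼ). Then E[Tₙ] = 0 and n bₙ Var(Tₙ) = (1/(bₙ f(x)²)) E[σ(X₁)² K²((x−X₁)/bₙ)] + cross terms that vanish, and if moreover the Vⱼ are independent of each other and of all Xⱼ, then n bₙ Var(Tₙ) → σ²(x) ‖K‖²_{L²} / f(x) as bₙ → 0. -/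
open MeasureTheory ProbabilityTheory Filter

theorem stmt_16 {Ω : Type*} [MeasurableSpace Ω] (P : Measure Ω)
    [IsProbabilityMeasure P]
    (μ σ K f : ℝ → ℝ) (A x : ℝ)
    (hKmeas : Measurable K) (hKbd : ∃ M, ∀ z, |K z| ≤ M)
    (hKsupp : ∀ z, z ∉ Set.Icc (-A) A → K z = 0) (hKint : ∫ z, K z = 1)
    (hf : Continuous f) (hfbd : ∃ B, ∀ y, |f y| ≤ B)
    (hfnn : ∀ y, 0 ≤ f y) (hfdens : ∫ y, f y = 1) (hfx : 0 < f x)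
    (hσmeas : Measurable σ) (hσbd : ∃ M, ∀ y, |σ y| ≤ M)
    (hσcont : ContinuousAt (fun y => (σ y)^2) x)
    (X V : ℕ → Ω → ℝ)
    (hXmeas : ∀ j, Measurable (X j)) (hVmeas : ∀ j, Measurable (V j))
    (hXlaw : ∀ j, Measure.map (X j) P
      = MeasureTheory.volume.withDensity (fun y => ENNReal.ofReal (f y)))
    (hViid : iIndepFun V P)
    (hVint : ∀ j, Integrable (V j) P)
    (hV2int : ∀ j, Integrable (fun ω => (V j ω)^2) P)
    (hVmean : ∀ j, ∫ ω, V j ω ∂P = 0) (hVvar : ∀ j, ∫ ω, (V j ω)^2 ∂P = 1)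
    (hindep : Indep (⨆ j, MeasurableSpace.comap (V j) inferInstance)
                    (⨆ j, MeasurableSpace.comap (X j) inferInstance) P)
    (b : ℕ → ℝ) (hb : ∀ n, 0 < b n) (hb0 : Tendsto b atTop (nhds 0))
    (T : ℕ → Ω → ℝ)
    (hT : ∀ n ω, T n ω = (1 / ((n : ℝ) * b n * f x)) *
      ∑ j ∈ Finset.range n, σ (X j ω) * V j ω * K ((x - X j ω) / b n)) :
    (∀ n, ∫ ω, T n ω ∂P = 0) ∧
    Tendsto (fun n : ℕ => (n : ℝ) * b n * variance (T n) P) atTop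
      (nhds ((σ x)^2 * (∫ z, (K z)^2) / f x)) := by
  obtain ⟨MK, hMK⟩ := hKbd
  obtain ⟨Mσ, hMσ⟩ := hσbd
  obtain ⟨B, hB⟩ := hfbd
  have hMK0 : 0 ≤ MK := le_trans (abs_nonneg _) (hMK 0)
  have hMσ0 : 0 ≤ Mσ := le_trans (abs_nonneg _) (hMσ 0)
  have hB0 : 0 ≤ B := le_trans (abs_nonneg _) (hB 0)
  -- kernel weight function
  set g : ℕ → ℝ → ℝ := fun n y => σ y * K ((x - y) / b n) with hg
  have hgmeas : ∀ n, Measurable (g n) := fun n =>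
    hσmeas.mul (hKmeas.comp (by fun_prop))
  have hgbd : ∀ n y, |g n y| ≤ Mσ * MK := fun n y => by
    rw [abs_mul]; exact mul_le_mul (hMσ y) (hMK _) (abs_nonneg _) hMσ0
  -- the summands
  set W : ℕ → ℕ → Ω → ℝ := fun n j ω => g n (X j ω) * V j ω with hW
  have hTW : ∀ n ω, T n ω =
      (1 / ((n : ℝ) * b n * f x)) * ∑ j ∈ Finset.range n, W n j ω := by
    intro n ω
    rw [hT]
    congr 1
    exact Finset.sum_congr rfl fun j _ => by simp only [hW, hg]; ring
  -- independence plumbing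
  have hVsup : ∀ j, Measurable[⨆ i, MeasurableSpace.comap (V i) inferInstance] (V j) :=
    fun j => Measurable.mono (measurable_iff_comap_le.2 le_rfl)
      (le_iSup (fun i => MeasurableSpace.comap (V i) inferInstance) j) le_rfl
  have hXsup : ∀ j, Measurable[⨆ i, MeasurableSpace.comap (X i) inferInstance] (X j) :=
    fun j => Measurable.mono (measurable_iff_comap_le.2 le_rfl)
      (le_iSup (fun i => MeasurableSpace.comap (X i) inferInstance) j) le_rfl
  have hIF : ∀ (F G : Ω → ℝ),
      Measurable[⨆ i, MeasurableSpace.comap (V i) inferInstance] F →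
      Measurable[⨆ i, MeasurableSpace.comap (X i) inferInstance] G →
      IndepFun F G P := fun F G hF hG =>
    indep_of_indep_of_le_right (indep_of_indep_of_le_left hindep hF.comap_le) hG.comap_le
  -- integrability of W
  have hWint : ∀ n j, Integrable (W n j) P := by
    intro n j
    exact (hVint j).bdd_mul (c := Mσ * MK) ((hgmeas n).comp (hXmeas j)).aestronglyMeasurable
      (.of_forall fun ω => hgbd n (X j ω))
  -- mean zero of each W
  have hWmean : ∀ n j, ∫ ω, W n j ω ∂P = 0 := by
    intro n j
    have hind : IndepFun (V j) (fun ω => g n (X j ω)) P :=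
      hIF _ _ (hVsup j) ((hgmeas n).comp (hXsup j))
    have := hind.symm.integral_fun_mul_eq_mul_integral
      ((hgmeas n).comp (hXmeas j)).aestronglyMeasurable (hVmeas j).aestronglyMeasurable
    rw [hW]
    simp only [hVmean j, mul_zero] at this ⊢
    exact this
  -- part 1 : mean of T is zero
  have hTmean : ∀ n, ∫ ω, T n ω ∂P = 0 := by
    intro n
    have : (fun ω => T n ω) =
        fun ω => (1 / ((n : ℝ) * b n * f x)) * ∑ j ∈ Finset.range n, W n j ω :=
      funext fun ω => hTW n ω
    rw [this, integral_const_mul, integral_finset_sum _ (fun j _ => hWint n j)]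
    simp [hWmean]
  refine ⟨hTmean, ?_⟩
  -- integrability of products
  have hVVint : ∀ j k, Integrable (fun ω => V j ω * V k ω) P := by
    intro j k
    rcases eq_or_ne j k with rfl | hjk
    · simpa [pow_two] using hV2int j
    · exact (hViid.indepFun hjk).integrable_mul (hVint j) (hVint k)
  have hWWint : ∀ n j k, Integrable (fun ω => W n j ω * W n k ω) P := by
    intro n j k
    have h1 : (fun ω => W n j ω * W n k ω) =
        fun ω => (g n (X j ω) * g n (X k ω)) * (V j ω * V k ω) :=
      funext fun ω => by simp only [hW]; ring
    rw [h1]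
    refine (hVVint j k).bdd_mul (c := (Mσ * MK) * (Mσ * MK))
      (((hgmeas n).comp (hXmeas j)).mul ((hgmeas n).comp (hXmeas k))).aestronglyMeasurable
      (.of_forall fun ω => ?_)
    calc ‖g n (X j ω) * g n (X k ω)‖ = |g n (X j ω)| * |g n (X k ω)| := abs_mul _ _
    _ ≤ (Mσ * MK) * (Mσ * MK) :=
      mul_le_mul (hgbd n _) (hgbd n _) (abs_nonneg _) (mul_nonneg hMσ0 hMK0)
  -- cross terms vanish
  have hWcross : ∀ n j k, j ≠ k → ∫ ω, W n j ω * W n k ω ∂P = 0 := by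
    intro n j k hjk
    have h1 : (fun ω => W n j ω * W n k ω) =
        fun ω => (V j ω * V k ω) * (g n (X j ω) * g n (X k ω)) :=
      funext fun ω => by simp only [hW]; ring
    have hind : IndepFun (fun ω => V j ω * V k ω) (fun ω => g n (X j ω) * g n (X k ω)) P :=
      hIF _ _ ((hVsup j).mul (hVsup k)) (((hgmeas n).comp (hXsup j)).mul ((hgmeas n).comp (hXsup k)))
    have hVV : ∫ ω, V j ω * V k ω ∂P = 0 := by
      rw [(hViid.indepFun hjk).integral_fun_mul_eq_mul_integral (hVmeas j).aestronglyMeasurable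
        (hVmeas k).aestronglyMeasurable, hVmean j, zero_mul]
    calc ∫ ω, W n j ω * W n k ω ∂P
        = ∫ ω, (V j ω * V k ω) * (g n (X j ω) * g n (X k ω)) ∂P := by rw [← h1]
    _ = (∫ ω, V j ω * V k ω ∂P) * ∫ ω, g n (X j ω) * g n (X k ω) ∂P :=
        hind.integral_fun_mul_eq_mul_integral ((hVmeas j).mul (hVmeas k)).aestronglyMeasurable
          (((hgmeas n).comp (hXmeas j)).mul ((hgmeas n).comp (hXmeas k))).aestronglyMeasurable
    _ = 0 := by rw [hVV, zero_mul]
  -- expectation with respect to the law of X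
  have hlaw : ∀ (j : ℕ) (φ : ℝ → ℝ), Measurable φ →
      ∫ ω, φ (X j ω) ∂P = ∫ y, f y * φ y := by
    intro j φ hφ
    rw [← integral_map (hXmeas j).aemeasurable hφ.aestronglyMeasurable, hXlaw j]
    have h1 : (fun y => ENNReal.ofReal (f y)) = fun y => ((f y).toNNReal : ENNReal) := rfl
    rw [h1, integral_withDensity_eq_integral_smul (by fun_prop : Measurable fun y => (f y).toNNReal)]
    simp only [NNReal.smul_def, smul_eq_mul]
    exact integral_congr_ae (.of_forall fun y => by
      simp [Real.coe_toNNReal _ (hfnn y)])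
  -- diagonal terms
  have hWdiag : ∀ n j, ∫ ω, (W n j ω)^2 ∂P = ∫ y, f y * (g n y)^2 := by
    intro n j
    have h1 : (fun ω => (W n j ω)^2) =
        fun ω => (V j ω)^2 * (g n (X j ω))^2 :=
      funext fun ω => by simp only [hW]; ring
    have hind : IndepFun (fun ω => (V j ω)^2) (fun ω => (g n (X j ω))^2) P :=
      hIF _ _ ((hVsup j).pow_const 2) (((hgmeas n).comp (hXsup j)).pow_const 2)
    calc ∫ ω, (W n j ω)^2 ∂P = ∫ ω, (V j ω)^2 * (g n (X j ω))^2 ∂P := by rw [← h1]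
    _ = (∫ ω, (V j ω)^2 ∂P) * ∫ ω, (g n (X j ω))^2 ∂P :=
        hind.integral_fun_mul_eq_mul_integral ((hVmeas j).pow_const 2).aestronglyMeasurable
          (((hgmeas n).comp (hXmeas j)).pow_const 2).aestronglyMeasurable
    _ = ∫ ω, (g n (X j ω))^2 ∂P := by rw [hVvar j, one_mul]
    _ = ∫ y, f y * (g n y)^2 := hlaw j _ ((hgmeas n).pow_const 2)
  -- L² membership of T n
  have hWmem : ∀ n j, MemLp (W n j) 2 P := by
    intro n j
    refine (memLp_two_iff_integrable_sq
      (((hgmeas n).comp (hXmeas j)).mul (hVmeas j)).aestronglyMeasurable).2 ?_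
    have h1 : (fun ω => W n j ω ^ 2) = fun ω => (g n (X j ω))^2 * (V j ω)^2 :=
      funext fun ω => by simp only [hW]; ring
    have := (hV2int j).bdd_mul (c := (Mσ * MK)^2)
      (((hgmeas n).comp (hXmeas j)).pow_const 2).aestronglyMeasurable
      (.of_forall fun ω => by
        rw [Real.norm_eq_abs, abs_pow, sq_abs, ← sq_abs]
        exact pow_le_pow_left₀ (abs_nonneg _) (hgbd n _) 2)
    simpa [h1, hW, mul_pow] using this
  have hTmem : ∀ n, MemLp (T n) 2 P := by
    intro n
    have h1 : T n = fun ω => (1 / ((n : ℝ) * b n * f x)) * ∑ j ∈ Finset.range n, W n j ω :=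
      funext fun ω => hTW n ω
    rw [h1]
    have := (memLp_finset_sum' (Finset.range n) (fun j _ => hWmem n j)).const_mul
      (1 / ((n : ℝ) * b n * f x))
    simpa using this
  -- variance formula
  have hVarT : ∀ n, variance (T n) P =
      (1 / ((n : ℝ) * b n * f x))^2 * (n * ∫ y, f y * (g n y)^2) := by
    intro n
    rw [variance_eq_sub (hTmem n), hTmean n]
    have h1 : (T n ^ 2) = fun ω => (1 / ((n : ℝ) * b n * f x))^2 *
        ∑ j ∈ Finset.range n, ∑ k ∈ Finset.range n, W n j ω * W n k ω := by
      funext ω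
      rw [Pi.pow_apply, hTW n ω, mul_pow]
      congr 1
      rw [sq, Finset.sum_mul_sum]
    rw [h1]
    rw [integral_const_mul, integral_finset_sum _ (fun j _ =>
      integrable_finset_sum _ (fun k _ => hWWint n j k))]
    have h2 : ∀ j ∈ Finset.range n,
        (∫ ω, ∑ k ∈ Finset.range n, W n j ω * W n k ω ∂P)
          = ∫ y, f y * (g n y)^2 := by
      intro j hj
      rw [integral_finset_sum _ (fun k _ => hWWint n j k), Finset.sum_eq_single j]
      · rw [← hWdiag n j]; congr 1; funext ω; ring
      · intro k _ hkj; exact hWcross n j k (fun h => hkj h.symm)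
      · intro h; exact absurd hj h
    rw [Finset.sum_congr rfl h2, Finset.sum_const, Finset.card_range, nsmul_eq_mul]
    ring
  -- rescaled integral
  set G : ℕ → ℝ → ℝ := fun n z => f (x - b n * z) * (σ (x - b n * z))^2 * (K z)^2 with hG
  have hInG : ∀ n, ∫ y, f y * (g n y)^2 = b n * ∫ z, G n z := by
    intro n
    have h1 : ∀ y, f y * (g n y)^2 = G n ((x - y) / b n) := by
      intro y
      have hbn : b n ≠ 0 := (hb n).ne'
      have : x - b n * ((x - y) / b n) = y := by
        field_simp
        ring
      rw [hG]
      simp only [this]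
      rw [hg]
      ring
    calc ∫ y, f y * (g n y)^2 = ∫ y, G n ((x - y) / b n) := by
          exact integral_congr_ae (.of_forall fun y => h1 y)
    _ = ∫ u, G n (u / b n) := integral_sub_left_eq_self (fun u => G n (u / b n)) _ x
    _ = |b n| • ∫ z, G n z := Measure.integral_comp_div (G n) (b n)
    _ = b n * ∫ z, G n z := by rw [abs_of_pos (hb n), smul_eq_mul]
  -- convergence of ∫ G n
  have hK2int : Integrable (fun z => (K z)^2) := by
    have hind : Integrable ((Set.Icc (-A) A).indicator (fun _ => MK^2 : ℝ → ℝ)) :=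
      IntegrableOn.integrable_indicator
        (integrableOn_const measure_Icc_lt_top.ne) measurableSet_Icc
    refine hind.mono' ((hKmeas.pow_const 2).aestronglyMeasurable) (.of_forall fun z => ?_)
    by_cases hz : z ∈ Set.Icc (-A) A
    · rw [Set.indicator_of_mem hz]
      rw [Real.norm_eq_abs, abs_pow, sq_abs, ← sq_abs]
      exact pow_le_pow_left₀ (abs_nonneg _) (hMK z) 2
    · rw [Set.indicator_of_notMem hz, hKsupp z hz]
      simp
  have hGtend : Tendsto (fun n => ∫ z, G n z) atTop
      (nhds (f x * (σ x)^2 * ∫ z, (K z)^2)) := by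
    have hlim : (f x * (σ x)^2 * ∫ z, (K z)^2) = ∫ z, f x * (σ x)^2 * (K z)^2 := by
      rw [integral_const_mul]
    rw [hlim]
    refine tendsto_integral_of_dominated_convergence
      (fun z => B * Mσ^2 * (K z)^2) (fun n => ?_) ((hK2int.const_mul _)) (fun n => ?_) ?_
    · exact ((((hf.measurable.comp (by fun_prop)).mul
        ((hσmeas.comp (by fun_prop)).pow_const 2))).mul (hKmeas.pow_const 2)).aestronglyMeasurable
    · refine .of_forall fun z => ?_
      rw [hG]
      simp only [Real.norm_eq_abs, abs_mul, abs_pow, sq_abs,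
        abs_of_nonneg (sq_nonneg (K z))]
      refine mul_le_mul_of_nonneg_right ?_ (sq_nonneg _)
      refine mul_le_mul (hB _) ?_ (sq_nonneg _) hB0
      rw [← sq_abs]
      exact pow_le_pow_left₀ (abs_nonneg _) (hMσ _) 2
    · refine .of_forall fun z => ?_
      have hx0 : Tendsto (fun n => x - b n * z) atTop (nhds x) := by
        have : Tendsto (fun n => b n * z) atTop (nhds 0) := by
          simpa using hb0.mul_const z
        simpa using tendsto_const_nhds.sub this
      have h1 : Tendsto (fun n => f (x - b n * z)) atTop (nhds (f x)) :=
        (hf.continuousAt).tendsto.comp hx0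
      have h2 : Tendsto (fun n => (σ (x - b n * z))^2) atTop (nhds ((σ x)^2)) :=
        hσcont.tendsto.comp hx0
      simpa [hG] using (h1.mul h2).mul_const ((K z)^2)
  -- final computation
  have hfx2 : (f x : ℝ) ≠ 0 := ne_of_gt hfx
  have hfinal : Tendsto (fun n => (∫ z, G n z) / (f x)^2) atTop
      (nhds ((σ x)^2 * (∫ z, (K z)^2) / f x)) := by
    have := hGtend.div_const ((f x)^2)
    convert this using 2
    field_simp
  refine Tendsto.congr' ?_ hfinal
  filter_upwards [eventually_ge_atTop 1] with n hn
  have hn0 : (n : ℝ) ≠ 0 := by positivity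
  have hbn : b n ≠ 0 := ne_of_gt (hb n)
  rw [hVarT n, hInG n]
  field_simp
end
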